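/- Let p ∈ (0,1), c > 0, μ ∈ ℝ, and 0 < Σ₀ < Σ₁, set f₀(y) = φ(y; 0, Σ₀), f₁(y) = φ(y; μ, Σ₁), and suppose D = μ² + (Σ₁ − Σ₀)(log(Σ₁/Σ₀) + 2 log((1−p)/(cp))) ≥ 0. Then the optimal Bayes risk satisfies ∫_ℝ min{(1−p)f₀(y), cp f₁(y)} dy = (1−p)[Φ((√Σ₀ μ − √(Σ₁D))/(Σ₁ − Σ₀)) + Φ((−√Σ₀ μ − √(Σ₁D))/(Σ₁ − Σ₀))] + cp[Φ((−√Σ₁ μ + √(Σ₀D))/(Σ₁ − Σ₀)) − Φ((−√Σ₁ μ − √(Σ₀D))/(Σ₁ − Σ₀))]. -/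

import Mathlib

open MeasureTheory

/-- The Gaussian probability density function with mean `m` and variance `v`. -/
noncomputable def gaussPDF (m v y : ℝ) : ℝ :=
  (Real.sqrt (2 * Real.pi * v))⁻¹ * Real.exp (-(y - m) ^ 2 / (2 * v))

/-- The standard Gaussian cumulative distribution function. -/
noncomputable def stdGaussCDF (z : ℝ) : ℝ := ∫ t in Set.Iic z, gaussPDF 0 1 t

section AuxLemmas
open Set

lemma gaussPDF_eq (m : ℝ) {v : ℝ} (hv : 0 < v) :
    gaussPDF m v = ProbabilityTheory.gaussianPDFReal m ⟨v, hv.le⟩ := by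
  funext y
  simp [gaussPDF, ProbabilityTheory.gaussianPDFReal]
  rfl

lemma integrable_gaussPDF (m : ℝ) {v : ℝ} (hv : 0 < v) : Integrable (gaussPDF m v) := by
  rw [gaussPDF_eq m hv]
  exact ProbabilityTheory.integrable_gaussianPDFReal m _

lemma gaussPDF_pos (m : ℝ) {v : ℝ} (hv : 0 < v) (y : ℝ) : 0 < gaussPDF m v y := by
  unfold gaussPDF
  positivity

lemma hpdf_affine (m : ℝ) {v : ℝ} (hv : 0 < v) (u : ℝ) :
    gaussPDF m v (Real.sqrt v * u + m) = (Real.sqrt v)⁻¹ * gaussPDF 0 1 u := by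
  have hsv : 0 < Real.sqrt v := Real.sqrt_pos.2 hv
  unfold gaussPDF
  rw [show (2 * Real.pi * v) = (2 * Real.pi) * v by ring,
    Real.sqrt_mul (by positivity) v]
  have h1 : (Real.sqrt v * u + m - m) ^ 2 = v * u ^ 2 := by
    rw [add_sub_cancel_right, mul_pow, Real.sq_sqrt hv.le]
  rw [h1]
  have h2 : -(v * u ^ 2) / (2 * v) = -(u - 0) ^ 2 / (2 * 1) := by
    field_simp; ring
  rw [h2, show (2 * Real.pi * 1) = 2 * Real.pi by ring, mul_inv]
  ring

lemma change_var (m : ℝ) {v : ℝ} (hv : 0 < v) (F : ℝ → ℝ) :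
    ∫ u, F (Real.sqrt v * u + m) = (Real.sqrt v)⁻¹ * ∫ t, F t := by
  have hsv : 0 < Real.sqrt v := Real.sqrt_pos.2 hv
  calc ∫ u, F (Real.sqrt v * u + m)
      = ∫ u, (fun x => F (x + m)) (Real.sqrt v * u) := rfl
    _ = |(Real.sqrt v)⁻¹| • ∫ x, F (x + m) := MeasureTheory.Measure.integral_comp_mul_left (fun x => F (x + m)) (Real.sqrt v)
    _ = (Real.sqrt v)⁻¹ * ∫ t, F t := by
        rw [MeasureTheory.integral_add_right_eq_self, abs_of_pos (by positivity), smul_eq_mul]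

lemma integral_Iic_gaussPDF (m : ℝ) {v : ℝ} (hv : 0 < v) (z : ℝ) :
    ∫ t in Iic z, gaussPDF m v t = stdGaussCDF ((z - m) / Real.sqrt v) := by
  have hsv : 0 < Real.sqrt v := Real.sqrt_pos.2 hv
  have key : ∀ u : ℝ, (Iic z).indicator (gaussPDF m v) (Real.sqrt v * u + m)
      = (Real.sqrt v)⁻¹ * (Iic ((z - m) / Real.sqrt v)).indicator (gaussPDF 0 1) u := by
    intro u
    by_cases h : u ≤ (z - m) / Real.sqrt v
    · have h' : Real.sqrt v * u + m ≤ z := by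
        rw [le_div_iff₀ hsv] at h; nlinarith
      rw [Set.indicator_of_mem (Set.mem_Iic.2 h'), Set.indicator_of_mem (Set.mem_Iic.2 h), hpdf_affine m hv]
    · have h' : ¬ (Real.sqrt v * u + m ≤ z) := by
        rw [le_div_iff₀ hsv] at h; intro hc; apply h; nlinarith
      rw [Set.indicator_of_notMem (by simpa using h'), Set.indicator_of_notMem (by simpa using h), mul_zero]
  have h1 := change_var m hv ((Iic z).indicator (gaussPDF m v))
  simp_rw [key] at h1
  rw [integral_const_mul] at h1
  have h2 : (∫ t, (Iic z).indicator (gaussPDF m v) t)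
      = ∫ u, (Iic ((z - m) / Real.sqrt v)).indicator (gaussPDF 0 1) u :=
    mul_left_cancel₀ (by positivity) h1.symm
  rw [← integral_indicator measurableSet_Iic, h2, integral_indicator measurableSet_Iic,
    stdGaussCDF]

lemma stdGaussCDF_Ioi (w : ℝ) :
    ∫ u in Ioi w, gaussPDF 0 1 u = stdGaussCDF (-w) := by
  have : ∀ x : ℝ, gaussPDF 0 1 (-x) = gaussPDF 0 1 x := by
    intro x; unfold gaussPDF; ring_nf
  rw [stdGaussCDF]
  calc ∫ u in Ioi w, gaussPDF 0 1 u = ∫ u in Ioi (-(-w)), gaussPDF 0 1 u := by rw [neg_neg]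
    _ = ∫ x in Iic (-w), gaussPDF 0 1 (-x) := (integral_comp_neg_Iic (-w) _).symm
    _ = ∫ t in Iic (-w), gaussPDF 0 1 t := by simp_rw [this]

lemma integral_Ioi_gaussPDF (m : ℝ) {v : ℝ} (hv : 0 < v) (z : ℝ) :
    ∫ t in Ioi z, gaussPDF m v t = stdGaussCDF (-((z - m) / Real.sqrt v)) := by
  have hsv : 0 < Real.sqrt v := Real.sqrt_pos.2 hv
  have key : ∀ u : ℝ, (Ioi z).indicator (gaussPDF m v) (Real.sqrt v * u + m)
      = (Real.sqrt v)⁻¹ * (Ioi ((z - m) / Real.sqrt v)).indicator (gaussPDF 0 1) u := by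
    intro u
    by_cases h : (z - m) / Real.sqrt v < u
    · have h' : z < Real.sqrt v * u + m := by
        rw [div_lt_iff₀ hsv] at h; nlinarith
      rw [Set.indicator_of_mem (Set.mem_Ioi.2 h'), Set.indicator_of_mem (Set.mem_Ioi.2 h), hpdf_affine m hv]
    · have h' : ¬ (z < Real.sqrt v * u + m) := by
        rw [div_lt_iff₀ hsv] at h; intro hc; apply h; nlinarith
      rw [Set.indicator_of_notMem (by simpa using h'), Set.indicator_of_notMem (by simpa using h), mul_zero]
  have h1 := change_var m hv ((Ioi z).indicator (gaussPDF m v))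
  simp_rw [key] at h1
  rw [integral_const_mul] at h1
  have h2 : (∫ t, (Ioi z).indicator (gaussPDF m v) t)
      = ∫ u, (Ioi ((z - m) / Real.sqrt v)).indicator (gaussPDF 0 1) u :=
    mul_left_cancel₀ (by positivity) h1.symm
  rw [← integral_indicator measurableSet_Ioi, h2, integral_indicator measurableSet_Ioi,
    stdGaussCDF_Ioi]


end AuxLemmas

/-- Optimal Bayes risk between `f₀ = φ(·; 0, Σ₀)` and `f₁ = φ(·; μ, Σ₁)`
with `0 < Σ₀ < Σ₁` and non-negative discriminant `D`:
`∫ min{(1−p)f₀, cp f₁}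
  = (1−p)[Φ((√Σ₀μ − √(Σ₁D))/(Σ₁−Σ₀)) + Φ((−√Σ₀μ − √(Σ₁D))/(Σ₁−Σ₀))]
    + cp[Φ((−√Σ₁μ + √(Σ₀D))/(Σ₁−Σ₀)) − Φ((−√Σ₁μ − √(Σ₀D))/(Σ₁−Σ₀))]`. -/
theorem stmt16 (p c μ S₀ S₁ : ℝ) (hp : p ∈ Set.Ioo (0 : ℝ) 1) (hc : 0 < c)
    (hS₀ : 0 < S₀) (hS : S₀ < S₁)
    (D : ℝ)
    (hD : D = μ ^ 2 + (S₁ - S₀) * (Real.log (S₁ / S₀) + 2 * Real.log ((1 - p) / (c * p))))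
    (hDpos : 0 ≤ D) :
    (∫ y : ℝ, min ((1 - p) * gaussPDF 0 S₀ y) (c * p * gaussPDF μ S₁ y)) =
      (1 - p) * (stdGaussCDF ((Real.sqrt S₀ * μ - Real.sqrt (S₁ * D)) / (S₁ - S₀)) +
          stdGaussCDF ((-(Real.sqrt S₀) * μ - Real.sqrt (S₁ * D)) / (S₁ - S₀))) +
        c * p * (stdGaussCDF ((-(Real.sqrt S₁) * μ + Real.sqrt (S₀ * D)) / (S₁ - S₀)) -
          stdGaussCDF ((-(Real.sqrt S₁) * μ - Real.sqrt (S₀ * D)) / (S₁ - S₀))) := by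
  obtain ⟨hp0, hp1⟩ := hp
  have ha : (0:ℝ) < 1 - p := by linarith
  have hb : (0:ℝ) < c * p := by positivity
  have hd : (0:ℝ) < S₁ - S₀ := by linarith
  have hS₁ : (0:ℝ) < S₁ := by linarith
  set a := 1 - p with ha'
  set b := c * p with hb'
  set k := Real.sqrt (S₀ * (S₁ * D)) with hk
  have hk2 : k ^ 2 = S₀ * (S₁ * D) := Real.sq_sqrt (by positivity)
  have hknn : 0 ≤ k := Real.sqrt_nonneg _
  set r₁ := (-(S₀ * μ) - k) / (S₁ - S₀) with hr₁
  set r₂ := (-(S₀ * μ) + k) / (S₁ - S₀) with hr₂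
  have hrle : r₁ ≤ r₂ := by
    rw [hr₁, hr₂, div_le_div_iff_of_pos_right hd]; linarith
  set la := Real.log a with hla
  set lb := Real.log b with hlb
  set l0 := Real.log S₀ with hl0
  set l1 := Real.log S₁ with hl1
  set lp := Real.log (2 * Real.pi) with hlp
  -- exponential representations
  have hga : ∀ y : ℝ, a * gaussPDF 0 S₀ y
      = Real.exp (la - (lp + l0) / 2 + -(y - 0) ^ 2 / (2 * S₀)) := by
    intro y
    unfold gaussPDF
    have h1 : ((Real.sqrt (2 * Real.pi * S₀))⁻¹ : ℝ) = Real.exp (-((lp + l0) / 2)) := by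
      rw [← Real.exp_log (show (0:ℝ) < (Real.sqrt (2 * Real.pi * S₀))⁻¹ by positivity)]
      congr 1
      rw [Real.log_inv, Real.log_sqrt (by positivity),
        Real.log_mul (by positivity) hS₀.ne']
    rw [h1, ← Real.exp_log ha, ← hla, ← Real.exp_add, ← Real.exp_add]
    exact congrArg Real.exp (by ring)
  have hgb : ∀ y : ℝ, b * gaussPDF μ S₁ y
      = Real.exp (lb - (lp + l1) / 2 + -(y - μ) ^ 2 / (2 * S₁)) := by
    intro y
    unfold gaussPDF
    have h1 : ((Real.sqrt (2 * Real.pi * S₁))⁻¹ : ℝ) = Real.exp (-((lp + l1) / 2)) := by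
      rw [← Real.exp_log (show (0:ℝ) < (Real.sqrt (2 * Real.pi * S₁))⁻¹ by positivity)]
      congr 1
      rw [Real.log_inv, Real.log_sqrt (by positivity),
        Real.log_mul (by positivity) hS₁.ne']
    rw [h1, ← Real.exp_log hb, ← hlb, ← Real.exp_add, ← Real.exp_add]
    exact congrArg Real.exp (by ring)
  -- the key quadratic identity
  have hk2' : k ^ 2 = S₀ * S₁ * μ ^ 2 + S₀ * S₁ * (S₁ - S₀) * ((l1 - l0) + 2 * (la - lb)) := by
    rw [hk2, hD, Real.log_div hS₁.ne' hS₀.ne', Real.log_div ha.ne' hb.ne']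
    ring
  have he1 : (S₁ - S₀) * r₁ = -(S₀ * μ) - k := by
    rw [hr₁, mul_div_cancel₀ _ hd.ne']
  have he2 : (S₁ - S₀) * r₂ = -(S₀ * μ) + k := by
    rw [hr₂, mul_div_cancel₀ _ hd.ne']
  have hiden : ∀ y : ℝ, (S₁ - S₀) * ((y - r₁) * (y - r₂))
      = 2 * S₀ * S₁ * ((lb - (lp + l1) / 2 + -(y - μ) ^ 2 / (2 * S₁))
        - (la - (lp + l0) / 2 + -(y - 0) ^ 2 / (2 * S₀))) := by
    intro y
    have hQ : (S₁ - S₀) * ((S₁ - S₀) * ((y - r₁) * (y - r₂)))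
        = ((S₁ - S₀) * y - (S₁ - S₀) * r₁) * ((S₁ - S₀) * y - (S₁ - S₀) * r₂) := by ring
    apply mul_left_cancel₀ hd.ne'
    rw [hQ, he1, he2]
    have hexp : (2:ℝ) * S₀ * S₁ * ((lb - (lp + l1) / 2 + -(y - μ) ^ 2 / (2 * S₁))
        - (la - (lp + l0) / 2 + -(y - 0) ^ 2 / (2 * S₀)))
        = 2 * S₀ * S₁ * (lb - la) + S₀ * S₁ * (l0 - l1) + S₁ * y ^ 2 - S₀ * (y - μ) ^ 2 := by
      field_simp
      ring
    rw [hexp]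
    linear_combination -hk2'
  -- pointwise comparisons
  have hle₁ : ∀ y ∈ Set.Iic r₁, a * gaussPDF 0 S₀ y ≤ b * gaussPDF μ S₁ y := by
    intro y hy
    simp only [Set.mem_Iic] at hy
    rw [hga y, hgb y, Real.exp_le_exp]
    have h1 : 0 ≤ (y - r₁) * (y - r₂) := by
      nlinarith [mul_nonneg (sub_nonneg.2 hy) (sub_nonneg.2 (hy.trans hrle))]
    have hid := hiden y
    set u := lb - (lp + l1) / 2 + -(y - μ) ^ 2 / (2 * S₁) with hu
    set v := la - (lp + l0) / 2 + -(y - 0) ^ 2 / (2 * S₀) with hv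
    have h2 : 0 ≤ 2 * S₀ * S₁ * (u - v) := hid ▸ mul_nonneg hd.le h1
    have h3 := (mul_nonneg_iff_of_pos_left (show (0:ℝ) < 2 * S₀ * S₁ by positivity)).1 h2
    linarith
  have hle₂ : ∀ y ∈ Set.Ioc r₁ r₂, b * gaussPDF μ S₁ y ≤ a * gaussPDF 0 S₀ y := by
    intro y hy
    rw [hga y, hgb y, Real.exp_le_exp]
    have h1 : (y - r₁) * (y - r₂) ≤ 0 :=
      mul_nonpos_iff.2 (Or.inl ⟨by linarith [hy.1], by linarith [hy.2]⟩)
    have hid := hiden y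
    set u := lb - (lp + l1) / 2 + -(y - μ) ^ 2 / (2 * S₁) with hu
    set v := la - (lp + l0) / 2 + -(y - 0) ^ 2 / (2 * S₀) with hv
    have h2 : 2 * S₀ * S₁ * (u - v) ≤ 0 :=
      hid ▸ mul_nonpos_iff.2 (Or.inl ⟨hd.le, h1⟩)
    have h3 := nonpos_of_mul_nonpos_right h2 (show (0:ℝ) < 2 * S₀ * S₁ by positivity)
    linarith
  have hle₃ : ∀ y ∈ Set.Ioi r₂, a * gaussPDF 0 S₀ y ≤ b * gaussPDF μ S₁ y := by
    intro y hy
    simp only [Set.mem_Ioi] at hy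
    rw [hga y, hgb y, Real.exp_le_exp]
    have h1 : 0 ≤ (y - r₁) * (y - r₂) := by
      nlinarith [mul_nonneg (sub_nonneg.2 (hrle.trans hy.le)) (sub_nonneg.2 hy.le)]
    have hid := hiden y
    set u := lb - (lp + l1) / 2 + -(y - μ) ^ 2 / (2 * S₁) with hu
    set v := la - (lp + l0) / 2 + -(y - 0) ^ 2 / (2 * S₀) with hv
    have h2 : 0 ≤ 2 * S₀ * S₁ * (u - v) := hid ▸ mul_nonneg hd.le h1
    have h3 := (mul_nonneg_iff_of_pos_left (show (0:ℝ) < 2 * S₀ * S₁ by positivity)).1 h2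
    linarith
  -- integrability
  have hint0 : Integrable (fun y => a * gaussPDF 0 S₀ y) :=
    (integrable_gaussPDF 0 hS₀).const_mul a
  have hint1 : Integrable (fun y => b * gaussPDF μ S₁ y) :=
    (integrable_gaussPDF μ hS₁).const_mul b
  have hmin : Integrable (fun y => min (a * gaussPDF 0 S₀ y) (b * gaussPDF μ S₁ y)) := by
    have h := hint0.inf hint1
    exact h.congr (Filter.Eventually.of_forall fun y => by
      simp [Pi.inf_apply])
  -- split the integral
  have hsplit1 : (∫ y : ℝ, min (a * gaussPDF 0 S₀ y) (b * gaussPDF μ S₁ y))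
      = (∫ y in Set.Iic r₁, min (a * gaussPDF 0 S₀ y) (b * gaussPDF μ S₁ y))
        + ∫ y in Set.Ioi r₁, min (a * gaussPDF 0 S₀ y) (b * gaussPDF μ S₁ y) :=
    (intervalIntegral.integral_Iic_add_Ioi hmin.integrableOn hmin.integrableOn).symm
  have hsplit2 : (∫ y in Set.Ioi r₁, min (a * gaussPDF 0 S₀ y) (b * gaussPDF μ S₁ y))
      = (∫ y in Set.Ioc r₁ r₂, min (a * gaussPDF 0 S₀ y) (b * gaussPDF μ S₁ y))
        + ∫ y in Set.Ioi r₂, min (a * gaussPDF 0 S₀ y) (b * gaussPDF μ S₁ y) := by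
    rw [← setIntegral_union (Set.Ioc_disjoint_Ioi le_rfl) measurableSet_Ioi
      hmin.integrableOn hmin.integrableOn, Set.Ioc_union_Ioi_eq_Ioi hrle]
  have hpc1 : (∫ y in Set.Iic r₁, min (a * gaussPDF 0 S₀ y) (b * gaussPDF μ S₁ y))
      = ∫ y in Set.Iic r₁, a * gaussPDF 0 S₀ y :=
    setIntegral_congr_fun measurableSet_Iic fun y hy => min_eq_left (hle₁ y hy)
  have hpc2 : (∫ y in Set.Ioc r₁ r₂, min (a * gaussPDF 0 S₀ y) (b * gaussPDF μ S₁ y))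
      = ∫ y in Set.Ioc r₁ r₂, b * gaussPDF μ S₁ y :=
    setIntegral_congr_fun measurableSet_Ioc fun y hy => min_eq_right (hle₂ y hy)
  have hpc3 : (∫ y in Set.Ioi r₂, min (a * gaussPDF 0 S₀ y) (b * gaussPDF μ S₁ y))
      = ∫ y in Set.Ioi r₂, a * gaussPDF 0 S₀ y :=
    setIntegral_congr_fun measurableSet_Ioi fun y hy => min_eq_left (hle₃ y hy)
  -- evaluate the three pieces
  have hv1 : (∫ y in Set.Iic r₁, a * gaussPDF 0 S₀ y)
      = a * stdGaussCDF ((r₁ - 0) / Real.sqrt S₀) := by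
    rw [integral_const_mul, integral_Iic_gaussPDF 0 hS₀]
  have hv3 : (∫ y in Set.Ioi r₂, a * gaussPDF 0 S₀ y)
      = a * stdGaussCDF (-((r₂ - 0) / Real.sqrt S₀)) := by
    rw [integral_const_mul, integral_Ioi_gaussPDF 0 hS₀]
  have hv2 : (∫ y in Set.Ioc r₁ r₂, b * gaussPDF μ S₁ y)
      = b * (stdGaussCDF ((r₂ - μ) / Real.sqrt S₁) - stdGaussCDF ((r₁ - μ) / Real.sqrt S₁)) := by
    have hu : (∫ y in Set.Iic r₁, b * gaussPDF μ S₁ y)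
        + (∫ y in Set.Ioc r₁ r₂, b * gaussPDF μ S₁ y)
        = ∫ y in Set.Iic r₂, b * gaussPDF μ S₁ y := by
      rw [← setIntegral_union (Set.Iic_disjoint_Ioc le_rfl) measurableSet_Ioc
        hint1.integrableOn hint1.integrableOn, Set.Iic_union_Ioc_eq_Iic hrle]
    simp_rw [integral_const_mul] at hu
    rw [integral_Iic_gaussPDF μ hS₁ r₁, integral_Iic_gaussPDF μ hS₁ r₂] at hu
    rw [integral_const_mul]
    linarith [hu]
  -- identify the CDF arguments
  have hsq0 : Real.sqrt S₀ * Real.sqrt S₀ = S₀ := Real.mul_self_sqrt hS₀.le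
  have hsq1 : Real.sqrt S₁ * Real.sqrt S₁ = S₁ := Real.mul_self_sqrt hS₁.le
  have hs0pos : 0 < Real.sqrt S₀ := Real.sqrt_pos.2 hS₀
  have hs1pos : 0 < Real.sqrt S₁ := Real.sqrt_pos.2 hS₁
  have hkk0 : k = Real.sqrt S₀ * Real.sqrt (S₁ * D) := by
    rw [hk, Real.sqrt_mul hS₀.le]
  have hkk1 : k = Real.sqrt S₁ * Real.sqrt (S₀ * D) := by
    rw [hk, show S₀ * (S₁ * D) = S₁ * (S₀ * D) by ring, Real.sqrt_mul hS₁.le]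
  have hA1 : (r₁ - 0) / Real.sqrt S₀ = (-(Real.sqrt S₀) * μ - Real.sqrt (S₁ * D)) / (S₁ - S₀) := by
    rw [sub_zero, div_eq_div_iff hs0pos.ne' hd.ne']
    linear_combination he1 + μ * hsq0 - hkk0
  have hA2 : -((r₂ - 0) / Real.sqrt S₀)
      = (Real.sqrt S₀ * μ - Real.sqrt (S₁ * D)) / (S₁ - S₀) := by
    rw [sub_zero, ← neg_div, div_eq_div_iff hs0pos.ne' hd.ne']
    linear_combination -he2 - μ * hsq0 - hkk0
  have hA3 : (r₂ - μ) / Real.sqrt S₁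
      = (-(Real.sqrt S₁) * μ + Real.sqrt (S₀ * D)) / (S₁ - S₀) := by
    rw [div_eq_div_iff hs1pos.ne' hd.ne']
    linear_combination he2 + μ * hsq1 + hkk1
  have hA4 : (r₁ - μ) / Real.sqrt S₁
      = (-(Real.sqrt S₁) * μ - Real.sqrt (S₀ * D)) / (S₁ - S₀) := by
    rw [div_eq_div_iff hs1pos.ne' hd.ne']
    linear_combination he1 + μ * hsq1 - hkk1
  rw [hsplit1, hsplit2, hpc1, hpc2, hpc3, hv1, hv2, hv3, hA1, hA2, hA3, hA4]
  ring
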